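/- Let v ∈ L²((0,π), ℂ) and α ∈ ℝ. Then the function λ ↦ Δ(α,λ) = 2(1 − cos(πλ)) + (α/(2iλ))(R(λ) − R(−λ)), defined for λ ≠ 0, tends to the limit −α·π·|ṽ(0)|² as λ → 0 (where ṽ(0) = ∫₀^π v(x) dx); equivalently, the entire extension of Δ(α,·) satisfies Δ(α,0) = −α·π·|∫₀^π v(x) dx|². -/

import Mathlib

open MeasureTheory intervalIntegral

/-- Fourier transform `ṽ(λ) = ∫₀^π e^{-iλx} v(x) dx`. -/
noncomputable def ftilde (v : ℝ → ℂ) (l : ℂ) : ℂ :=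
  ∫ x in (0:ℝ)..Real.pi, Complex.exp (-Complex.I * l * x) * v x

/-- `Φ(λ) = ∫₀^π (∫₀^x e^{-iλ(x−t)} conj(v(t)) dt) v(x) dx`. -/
noncomputable def PhiFun (v : ℝ → ℂ) (l : ℂ) : ℂ :=
  ∫ x in (0:ℝ)..Real.pi,
    (∫ t in (0:ℝ)..x, Complex.exp (-Complex.I * l * (x - t)) * (starRingEnd ℂ) (v t)) * v x

/-- `Δ(0,λ) = 2(1 − cos πλ)`. -/
noncomputable def Delta0 (l : ℂ) : ℂ := 2 * (1 - Complex.cos (Real.pi * l))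

/-- `R(λ) = (1 − e^{-iλπ})(Φ(λ)(1 − e^{iλπ}) − ṽ(λ)ṽ*(λ))`. -/
noncomputable def Rfun (v : ℝ → ℂ) (l : ℂ) : ℂ :=
  (1 - Complex.exp (-Complex.I * l * Real.pi)) *
    (PhiFun v l * (1 - Complex.exp (Complex.I * l * Real.pi))
      - ftilde v l * (starRingEnd ℂ) (ftilde v ((starRingEnd ℂ) l)))

/-- `Δ(α,λ) = Δ(0,λ) + (α/(2iλ))(R(λ) − R(−λ))`. -/
noncomputable def DeltaA (v : ℝ → ℂ) (α : ℝ) (l : ℂ) : ℂ :=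
  Delta0 l + ((α : ℂ) / (2 * Complex.I * l)) * (Rfun v l - Rfun v (-l))

namespace Stmt15Aux

open Filter Complex

lemma tendsto_frac {f : ℂ → ℂ} {d : ℂ} (h0 : f 0 = 0) (h : HasDerivAt f d 0) :
    Tendsto (fun l => f l / (2 * Complex.I * l)) (nhdsWithin 0 {(0:ℂ)}ᶜ)
      (nhds (d / (2 * Complex.I))) := by
  have h1 := (hasDerivAt_iff_tendsto_slope.mp h).div_const (2 * Complex.I)
  refine h1.congr fun l => ?_
  rw [slope_def_field]
  simp [h0]
  rw [div_div, mul_comm]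

lemma hE (c : ℂ) : HasDerivAt (fun l : ℂ => 1 - Complex.exp (c * l)) (-c) 0 := by
  have h1 : HasDerivAt (fun l : ℂ => c * l) c 0 := by
    simpa using (hasDerivAt_id (0:ℂ)).const_mul c
  have h2 := (Complex.hasDerivAt_exp (c * 0)).comp 0 h1
  simpa using h2.const_sub 1

lemma hD0 : HasDerivAt (fun l : ℂ => 2 * (1 - Complex.cos ((Real.pi:ℂ) * l))) 0 0 := by
  have h1 : HasDerivAt (fun l : ℂ => (Real.pi:ℂ) * l) (Real.pi:ℂ) 0 := by
    simpa using (hasDerivAt_id (0:ℂ)).const_mul (Real.pi:ℂ)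
  have h2 := (Complex.hasDerivAt_cos ((Real.pi:ℂ) * 0)).comp 0 h1
  simpa using (h2.const_sub 1).const_mul (2:ℂ)

lemma hprod (l : ℂ) : Delta0 l =
    (1 - Complex.exp (-Complex.I * l * Real.pi)) * (1 - Complex.exp (Complex.I * l * Real.pi)) := by
  rw [Delta0, Complex.cos]
  have e1 : ((Real.pi:ℂ) * l * Complex.I) = Complex.I * l * Real.pi := by ring
  have e2 : (-((Real.pi:ℂ) * l) * Complex.I) = -Complex.I * l * Real.pi := by ring
  rw [e1, e2]
  have h3 : Complex.exp (-Complex.I * l * Real.pi) * Complex.exp (Complex.I * l * Real.pi) = 1 := by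
    rw [← Complex.exp_add]; ring_nf; exact Complex.exp_zero
  linear_combination -h3

lemma heq (v : ℝ → ℂ) (α : ℝ) (l : ℂ) (hl : l ≠ 0) :
    DeltaA v α l = Delta0 l + (α:ℂ) *
      ( Delta0 l / (2 * Complex.I * l) * (PhiFun v l - PhiFun v (-l))
        - (1 - Complex.exp (-Complex.I * l * Real.pi)) / (2 * Complex.I * l) *
            (ftilde v l * (starRingEnd ℂ) (ftilde v ((starRingEnd ℂ) l)))
        + (1 - Complex.exp (Complex.I * l * Real.pi)) / (2 * Complex.I * l) *
            (ftilde v (-l) * (starRingEnd ℂ) (ftilde v ((starRingEnd ℂ) (-l)))) ) := by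
  have em1 : Complex.exp (-Complex.I * -l * Real.pi) = Complex.exp (Complex.I * l * Real.pi) := by
    congr 1; ring
  have em2 : Complex.exp (Complex.I * -l * Real.pi) = Complex.exp (-Complex.I * l * Real.pi) := by
    congr 1; ring
  simp only [DeltaA, Rfun, em1, em2, hprod l]
  field_simp
  ring_nf

lemma expb {z : ℂ} (hz : ‖z‖ ≤ 1) {s : ℝ} (h0 : 0 ≤ s) (hs : s ≤ Real.pi) (c : ℂ)
    (hc : ‖c‖ = 1) : ‖Complex.exp (c * z * s)‖ ≤ Real.exp Real.pi := by
  rw [Complex.norm_exp]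
  apply Real.exp_le_exp.mpr
  have h1 : (c * z * (s:ℂ)).re = (c * z).re * s := by
    simp [Complex.mul_re]
  rw [h1]
  have h2 : |(c * z).re| ≤ 1 := by
    calc |(c*z).re| ≤ ‖c*z‖ := Complex.abs_re_le_norm _
    _ = ‖c‖ * ‖z‖ := by rw [norm_mul]
    _ ≤ 1 := by rw [hc, one_mul]; exact hz
  nlinarith [abs_le.mp h2, Real.pi_pos]

lemma inner_eq (v : ℝ → ℂ) (l : ℂ) (x : ℝ) :
    (∫ t in (0:ℝ)..x, Complex.exp (-Complex.I * l * (x - t)) * (starRingEnd ℂ) (v t))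
    = Complex.exp (-Complex.I * l * x) *
        ∫ t in (0:ℝ)..x, Complex.exp (Complex.I * l * t) * (starRingEnd ℂ) (v t) := by
  rw [← intervalIntegral.integral_const_mul]
  refine intervalIntegral.integral_congr fun t _ => ?_
  rw [← mul_assoc, ← Complex.exp_add]
  congr 2
  ring

lemma phi_bound (v : ℝ → ℂ) (hInt : IntervalIntegrable v volume 0 Real.pi)
    (hconjInt : IntervalIntegrable (fun t => (starRingEnd ℂ) (v t)) volume 0 Real.pi) :
    ∀ l : ℂ, ‖l‖ ≤ 1 → ‖PhiFun v l‖ ≤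
      Real.exp Real.pi * (∫ t in (0:ℝ)..Real.pi, ‖v t‖) * (∫ t in (0:ℝ)..Real.pi, ‖v t‖) := by
  intro l hl
  set Cv := ∫ t in (0:ℝ)..Real.pi, ‖v t‖ with hCv
  set g : ℝ → ℂ := fun x =>
    ∫ t in (0:ℝ)..x, Complex.exp (-Complex.I * l * (x - t)) * (starRingEnd ℂ) (v t) with hg
  have hPInt : IntervalIntegrable
      (fun t => Complex.exp (Complex.I * l * t) * (starRingEnd ℂ) (v t)) volume 0 Real.pi :=
    hconjInt.continuousOn_mul ((Complex.continuous_exp.comp (by fun_prop)).continuousOn)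
  have hPcont : ContinuousOn
      (fun x => ∫ t in (0:ℝ)..x, Complex.exp (Complex.I * l * t) * (starRingEnd ℂ) (v t))
      (Set.uIcc 0 Real.pi) :=
    intervalIntegral.continuousOn_primitive_interval' hPInt Set.left_mem_uIcc
  have hgcont : ContinuousOn g (Set.uIcc 0 Real.pi) := by
    have hce : Continuous fun x : ℝ => Complex.exp (-Complex.I * l * x) := by fun_prop
    refine ((hce.continuousOn.mul hPcont)).congr ?_
    intro x _
    exact inner_eq v l x
  have hgb : ∀ x ∈ Set.Icc (0:ℝ) Real.pi, ‖g x‖ ≤ Real.exp Real.pi * Cv := by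
    rintro x ⟨hx0, hxπ⟩
    have hsub : Set.uIcc (0:ℝ) x ⊆ Set.uIcc (0:ℝ) Real.pi := by
      rw [Set.uIcc_of_le hx0, Set.uIcc_of_le Real.pi_pos.le]
      exact Set.Icc_subset_Icc le_rfl hxπ
    have hconjx : IntervalIntegrable (fun t => (starRingEnd ℂ) (v t)) volume 0 x :=
      hconjInt.mono_set hsub
    have hgInt : IntervalIntegrable
        (fun t => Complex.exp (-Complex.I * l * (x - t)) * (starRingEnd ℂ) (v t)) volume 0 x :=
      hconjx.continuousOn_mul ((Complex.continuous_exp.comp (by fun_prop)).continuousOn)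
    calc ‖g x‖ ≤ ∫ t in (0:ℝ)..x,
        ‖Complex.exp (-Complex.I * l * (x - t)) * (starRingEnd ℂ) (v t)‖ :=
          intervalIntegral.norm_integral_le_integral_norm hx0
    _ ≤ ∫ t in (0:ℝ)..x, Real.exp Real.pi * ‖v t‖ := by
        refine intervalIntegral.integral_mono_on hx0 hgInt.norm
          ((hInt.norm.const_mul _).mono_set hsub) ?_
        rintro t ⟨ht0, htx⟩
        rw [norm_mul]
        have hcast : ((x:ℂ) - (t:ℂ)) = ((x - t : ℝ) : ℂ) := by push_cast; ring
        rw [hcast]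
        have hb := expb hl (by linarith : (0:ℝ) ≤ x - t) (by linarith : x - t ≤ Real.pi)
          (-Complex.I) (by simp)
        have hnc : ‖(starRingEnd ℂ) (v t)‖ = ‖v t‖ := by simp
        rw [hnc]
        exact mul_le_mul_of_nonneg_right hb (norm_nonneg _)
    _ ≤ ∫ t in (0:ℝ)..Real.pi, Real.exp Real.pi * ‖v t‖ := by
        refine intervalIntegral.integral_mono_interval le_rfl hx0 hxπ ?_
          (hInt.norm.const_mul _)
        exact Filter.Eventually.of_forall fun t =>
          mul_nonneg (Real.exp_nonneg _) (norm_nonneg _)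
    _ = Real.exp Real.pi * Cv := by rw [intervalIntegral.integral_const_mul]
  have hgvInt : IntervalIntegrable (fun x => g x * v x) volume 0 Real.pi :=
    hInt.continuousOn_mul hgcont
  calc ‖PhiFun v l‖ ≤ ∫ x in (0:ℝ)..Real.pi, ‖g x * v x‖ :=
        intervalIntegral.norm_integral_le_integral_norm Real.pi_pos.le
  _ ≤ ∫ x in (0:ℝ)..Real.pi, (Real.exp Real.pi * Cv) * ‖v x‖ := by
      refine intervalIntegral.integral_mono_on Real.pi_pos.le hgvInt.norm
        (hInt.norm.const_mul _) ?_
      intro x hx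
      rw [norm_mul]
      exact mul_le_mul_of_nonneg_right (hgb x hx) (norm_nonneg _)
  _ = Real.exp Real.pi * Cv * Cv := by rw [intervalIntegral.integral_const_mul]

end Stmt15Aux

theorem stmt15 (v : ℝ → ℂ)
    (hv : MemLp v 2 (volume.restrict (Set.Ioo (0:ℝ) Real.pi))) (α : ℝ) :
    Filter.Tendsto (fun l : ℂ => DeltaA v α l) (nhdsWithin 0 {(0:ℂ)}ᶜ)
      (nhds (-(α : ℂ) * (Real.pi : ℂ) *
        ((‖∫ x in (0:ℝ)..Real.pi, v x‖ : ℝ) : ℂ) ^ 2)) := by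
  classical
  open Filter Complex Stmt15Aux in
  haveI : IsFiniteMeasure (volume.restrict (Set.Ioo (0:ℝ) Real.pi)) := by
    constructor
    rw [Measure.restrict_apply_univ]
    simp [Real.volume_Ioo]
  have hmeq : volume.restrict (Set.Ioc (0:ℝ) Real.pi) = volume.restrict (Set.Ioo (0:ℝ) Real.pi) :=
    Measure.restrict_congr_set MeasureTheory.Ioo_ae_eq_Ioc.symm
  have hvI : Integrable v (volume.restrict (Set.Ioc (0:ℝ) Real.pi)) := by
    rw [hmeq]; exact hv.integrable one_le_two
  have hInt : IntervalIntegrable v volume 0 Real.pi :=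
    (intervalIntegrable_iff_integrableOn_Ioc_of_le Real.pi_pos.le).mpr hvI
  have hvconjI : Integrable (fun t => (starRingEnd ℂ) (v t))
      (volume.restrict (Set.Ioc (0:ℝ) Real.pi)) := by
    refine hvI.norm.mono' (Complex.continuous_conj.comp_aestronglyMeasurable hvI.1) ?_
    exact Filter.Eventually.of_forall fun t => by simp
  have hconjInt : IntervalIntegrable (fun t => (starRingEnd ℂ) (v t)) volume 0 Real.pi :=
    (intervalIntegrable_iff_integrableOn_Ioc_of_le Real.pi_pos.le).mpr hvconjI
  -- continuity of ftilde at 0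
  have hft : ContinuousAt (ftilde v) 0 := by
    apply intervalIntegral.continuousAt_of_dominated_interval
      (bound := fun x => Real.exp Real.pi * ‖v x‖)
    · filter_upwards with l
      rw [Set.uIoc_of_le Real.pi_pos.le]
      exact ((Complex.continuous_exp.comp (by fun_prop)).aestronglyMeasurable).mul hvI.1
    · have h1 : ∀ᶠ l : ℂ in nhds 0, ‖l‖ ≤ 1 := by
        filter_upwards [Metric.closedBall_mem_nhds (0:ℂ) one_pos] with l hl
        simpa [Metric.mem_closedBall, dist_eq_norm] using hl
      filter_upwards [h1] with l hl
      refine Filter.Eventually.of_forall fun x hx => ?_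
      rw [Set.uIoc_of_le Real.pi_pos.le] at hx
      rw [norm_mul]
      exact mul_le_mul_of_nonneg_right (expb hl hx.1.le hx.2 (-Complex.I) (by simp))
        (norm_nonneg _)
    · exact (hInt.norm).const_mul _
    · refine Filter.Eventually.of_forall fun x _ => ?_
      exact ((Complex.continuous_exp.comp (by fun_prop)).mul continuous_const).continuousAt
  -- limits of the scalar factors
  have hA : Filter.Tendsto (fun l : ℂ => Delta0 l / (2 * Complex.I * l))
      (nhdsWithin 0 {(0:ℂ)}ᶜ) (nhds 0) := by
    have h := tendsto_frac (f := fun l : ℂ => 2 * (1 - Complex.cos ((Real.pi:ℂ) * l)))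
      (by simp) hD0
    simpa [Delta0] using h
  have hB : Filter.Tendsto
      (fun l : ℂ => (1 - Complex.exp (-Complex.I * l * Real.pi)) / (2 * Complex.I * l))
      (nhdsWithin 0 {(0:ℂ)}ᶜ) (nhds ((Real.pi : ℂ) / 2)) := by
    have h := tendsto_frac (f := fun l : ℂ => 1 - Complex.exp ((-Complex.I * Real.pi) * l))
      (by simp) (hE _)
    have harg : ∀ l : ℂ, (-Complex.I * (Real.pi:ℂ)) * l = -Complex.I * l * Real.pi :=
      fun l => by ring
    have hval : (-(-Complex.I * (Real.pi:ℂ))) / (2 * Complex.I) = (Real.pi : ℂ) / 2 := by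
      field_simp
    rw [hval] at h
    simpa only [harg] using h
  have hC : Filter.Tendsto
      (fun l : ℂ => (1 - Complex.exp (Complex.I * l * Real.pi)) / (2 * Complex.I * l))
      (nhdsWithin 0 {(0:ℂ)}ᶜ) (nhds (-((Real.pi : ℂ) / 2))) := by
    have h := tendsto_frac (f := fun l : ℂ => 1 - Complex.exp ((Complex.I * Real.pi) * l))
      (by simp) (hE _)
    have harg : ∀ l : ℂ, (Complex.I * (Real.pi:ℂ)) * l = Complex.I * l * Real.pi :=
      fun l => by ring
    have hval : (-(Complex.I * (Real.pi:ℂ))) / (2 * Complex.I) = -((Real.pi : ℂ) / 2) := by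
      field_simp
    rw [hval] at h
    simpa only [harg] using h
  -- products with the Fourier transforms
  have hconjT : Filter.Tendsto (fun l : ℂ => (starRingEnd ℂ) l) (nhds 0) (nhds 0) := by
    simpa using Complex.continuous_conj.tendsto (0:ℂ)
  have h2 : Filter.Tendsto (fun l : ℂ => ftilde v ((starRingEnd ℂ) l)) (nhds 0)
      (nhds (ftilde v 0)) := hft.tendsto.comp hconjT
  have h3 : Filter.Tendsto (fun l : ℂ => (starRingEnd ℂ) (ftilde v ((starRingEnd ℂ) l)))
      (nhds 0) (nhds ((starRingEnd ℂ) (ftilde v 0))) :=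
    (Complex.continuous_conj.tendsto _).comp h2
  have hFP : Filter.Tendsto
      (fun l : ℂ => ftilde v l * (starRingEnd ℂ) (ftilde v ((starRingEnd ℂ) l))) (nhds 0)
      (nhds (ftilde v 0 * (starRingEnd ℂ) (ftilde v 0))) := hft.tendsto.mul h3
  have hneg : Filter.Tendsto (fun l : ℂ => -l) (nhds (0:ℂ)) (nhds 0) := by
    simpa using (continuous_neg (G := ℂ)).tendsto (0:ℂ)
  have hFPm : Filter.Tendsto
      (fun l : ℂ => ftilde v (-l) * (starRingEnd ℂ) (ftilde v ((starRingEnd ℂ) (-l)))) (nhds 0)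
      (nhds (ftilde v 0 * (starRingEnd ℂ) (ftilde v 0))) := hFP.comp hneg
  -- squeeze the PhiFun term
  have hCv0 : (0:ℝ) ≤ ∫ t in (0:ℝ)..Real.pi, ‖v t‖ :=
    intervalIntegral.integral_nonneg Real.pi_pos.le fun _ _ => norm_nonneg _
  set M : ℝ := Real.exp Real.pi * (∫ t in (0:ℝ)..Real.pi, ‖v t‖) * (∫ t in (0:ℝ)..Real.pi, ‖v t‖)
    with hM
  have hterm1 : Filter.Tendsto
      (fun l : ℂ => Delta0 l / (2 * Complex.I * l) * (PhiFun v l - PhiFun v (-l)))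
      (nhdsWithin 0 {(0:ℂ)}ᶜ) (nhds 0) := by
    apply squeeze_zero_norm'
      (a := fun l : ℂ => ‖Delta0 l / (2 * Complex.I * l)‖ * (2 * M))
    · have h1 : ∀ᶠ l : ℂ in nhdsWithin 0 {(0:ℂ)}ᶜ, ‖l‖ ≤ 1 := by
        apply Filter.Eventually.filter_mono nhdsWithin_le_nhds
        filter_upwards [Metric.closedBall_mem_nhds (0:ℂ) one_pos] with l hl
        simpa [Metric.mem_closedBall, dist_eq_norm] using hl
      filter_upwards [h1] with l hl
      rw [norm_mul]
      refine mul_le_mul_of_nonneg_left ?_ (norm_nonneg _)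
      calc ‖PhiFun v l - PhiFun v (-l)‖ ≤ ‖PhiFun v l‖ + ‖PhiFun v (-l)‖ := norm_sub_le _ _
      _ ≤ M + M := add_le_add (phi_bound v hInt hconjInt l hl)
          (phi_bound v hInt hconjInt (-l) (by simpa using hl))
      _ = 2 * M := by ring
    · have := (hA.norm).mul_const (2 * M)
      simpa using this
  -- assemble
  have hD0t : Filter.Tendsto (fun l : ℂ => Delta0 l) (nhdsWithin 0 {(0:ℂ)}ᶜ) (nhds 0) := by
    have hc : Continuous Delta0 := by
      unfold Delta0
      fun_prop
    have := (hc.tendsto 0).mono_left (nhdsWithin_le_nhds (s := {(0:ℂ)}ᶜ))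
    rwa [show Delta0 0 = 0 by simp [Delta0]] at this
  set P0 : ℂ := ftilde v 0 * (starRingEnd ℂ) (ftilde v 0) with hP0
  have hALL : Filter.Tendsto
      (fun l : ℂ => Delta0 l + (α:ℂ) *
        ( Delta0 l / (2 * Complex.I * l) * (PhiFun v l - PhiFun v (-l))
          - (1 - Complex.exp (-Complex.I * l * Real.pi)) / (2 * Complex.I * l) *
              (ftilde v l * (starRingEnd ℂ) (ftilde v ((starRingEnd ℂ) l)))
          + (1 - Complex.exp (Complex.I * l * Real.pi)) / (2 * Complex.I * l) *
              (ftilde v (-l) * (starRingEnd ℂ) (ftilde v ((starRingEnd ℂ) (-l)))) ))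
      (nhdsWithin 0 {(0:ℂ)}ᶜ)
      (nhds (0 + (α:ℂ) * (0 - (Real.pi:ℂ)/2 * P0 + (-((Real.pi:ℂ)/2)) * P0))) := by
    refine hD0t.add (Filter.Tendsto.const_mul _ ?_)
    exact (hterm1.sub (hB.mul (hFP.mono_left nhdsWithin_le_nhds))).add
      (hC.mul (hFPm.mono_left nhdsWithin_le_nhds))
  have hfinal : (0 + (α:ℂ) * (0 - (Real.pi:ℂ)/2 * P0 + (-((Real.pi:ℂ)/2)) * P0))
      = -(α : ℂ) * (Real.pi : ℂ) * ((‖∫ x in (0:ℝ)..Real.pi, v x‖ : ℝ) : ℂ) ^ 2 := by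
    have hft0 : ftilde v 0 = ∫ x in (0:ℝ)..Real.pi, v x := by
      simp [ftilde]
    rw [hP0, hft0, Complex.mul_conj]
    rw [Complex.normSq_eq_norm_sq]
    push_cast
    ring
  rw [hfinal] at hALL
  refine hALL.congr' ?_
  filter_upwards [self_mem_nhdsWithin] with l hl
  exact (heq v α l hl).symm
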